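/- arXiv:1201.4703 — 2 statements merged into one kernel-verified Lean document; each statement's English description precedes it below -/
import Mathlib

section
/- Define the (q,b)-Fibonacci polynomials F_n(x,b,s,q) = ∑_{k=0}^{⌊(n-1)/2⌋} q^{k²}·[n-1-k choose k]_q · s^k·x^{n-1-2k} / ((qb;q)_k·(q^{n-k}b;q)_k) for n ≥ 1, with F_0 = 0. Then F_n = x·F_{n-1} + (q^{n-2}s/((1-q^{n-2}b)(1-q^{n-1}b)))·F_{n-2} for all n ≥ 2. -/
open Finset

noncomputable section

/-- The field `ℚ(q,b,s,x)` of rational functions. -/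
abbrev K : Type := FractionRing (MvPolynomial (Fin 4) ℚ)

def q : K := algebraMap (MvPolynomial (Fin 4) ℚ) K (MvPolynomial.X 0)
def b : K := algebraMap (MvPolynomial (Fin 4) ℚ) K (MvPolynomial.X 1)
def s : K := algebraMap (MvPolynomial (Fin 4) ℚ) K (MvPolynomial.X 2)
def x : K := algebraMap (MvPolynomial (Fin 4) ℚ) K (MvPolynomial.X 3)

/-- The q-Pochhammer symbol `(a;q)_n = ∏_{j=0}^{n-1} (1 - q^j a)`. -/
def qPoch (a : K) (n : ℕ) : K := ∏ j ∈ range n, (1 - q ^ j * a)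

/-- The Gaussian binomial coefficient `[n choose k]_q`. -/
def gbinom (n k : ℕ) : K := qPoch q n / (qPoch q k * qPoch q (n - k))

/-- The (q,b)-Fibonacci polynomials, defined by the explicit sum (2.4). -/
def qbFib (n : ℕ) : K :=
  if n = 0 then 0 else
    ∑ k ∈ range ((n - 1) / 2 + 1),
      q ^ (k ^ 2) * gbinom (n - 1 - k) k * s ^ k * x ^ (n - 1 - 2 * k) /
        (qPoch (q * b) k * qPoch (q ^ (n - k) * b) k)

lemma qPoch_zero (a : K) : qPoch a 0 = 1 := by simp [qPoch]

lemma qPoch_succ (a : K) (n : ℕ) : qPoch a (n+1) = qPoch a n * (1 - q ^ n * a) :=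
  Finset.prod_range_succ _ _

lemma qPoch_shift (a : K) (n : ℕ) : qPoch a (n+1) = (1 - a) * qPoch (q * a) n := by
  rw [qPoch, Finset.prod_range_succ', qPoch]
  rw [mul_comm]
  congr 1
  · simp
  · exact Finset.prod_congr rfl fun j _ => by rw [pow_succ]; ring

lemma algMap_inj : Function.Injective (algebraMap (MvPolynomial (Fin 4) ℚ) K) :=
  IsFractionRing.injective _ _

lemma one_sub_ne (p : MvPolynomial (Fin 4) ℚ)
    (h : MvPolynomial.eval (fun _ => (0:ℚ)) p = 0) :
    (1 : K) - algebraMap (MvPolynomial (Fin 4) ℚ) K p ≠ 0 := by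
  intro h0
  have h1 : algebraMap (MvPolynomial (Fin 4) ℚ) K (1 - p) = 0 := by
    rw [map_sub, map_one, h0]
  have h2 : (1 - p : MvPolynomial (Fin 4) ℚ) = 0 := by
    apply algMap_inj; rw [h1, map_zero]
  have h4 : p = 1 := by rwa [sub_eq_zero, eq_comm] at h2
  rw [h4] at h
  simp at h

lemma one_sub_qb_ne (a : ℕ) : (1:K) - q ^ a * b ≠ 0 := by
  have : q ^ a * b = algebraMap (MvPolynomial (Fin 4) ℚ) K
      (MvPolynomial.X 0 ^ a * MvPolynomial.X 1) := by
    simp [q, b, map_mul, map_pow]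
  rw [this]
  exact one_sub_ne _ (by simp)

lemma one_sub_qq_ne (a : ℕ) : (1:K) - q ^ a * q ≠ 0 := by
  have : q ^ a * q = algebraMap (MvPolynomial (Fin 4) ℚ) K
      (MvPolynomial.X 0 ^ a * MvPolynomial.X 0) := by
    simp [q, map_mul, map_pow]
  rw [this]
  exact one_sub_ne _ (by simp)

lemma qPoch_q_ne (n : ℕ) : qPoch q n ≠ 0 :=
  Finset.prod_ne_zero_iff.mpr fun j _ => one_sub_qq_ne j

lemma qPoch_qb_ne (i n : ℕ) : qPoch (q ^ i * b) n ≠ 0 := by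
  refine Finset.prod_ne_zero_iff.mpr fun j _ => ?_
  rw [show (1:K) - q ^ j * (q ^ i * b) = 1 - q ^ (j+i) * b by rw [pow_add]; ring]
  exact one_sub_qb_ne _

lemma qPoch_qb_ne' (n : ℕ) : qPoch (q * b) n ≠ 0 := by
  rw [show q * b = q ^ 1 * b by ring]
  exact qPoch_qb_ne 1 n

lemma gbinom_zero (n : ℕ) : gbinom n 0 = 1 := by
  rw [gbinom, Nat.sub_zero, qPoch_zero, one_mul, div_self (qPoch_q_ne n)]

lemma gbinom_self (n : ℕ) : gbinom n n = 1 := by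
  rw [gbinom, Nat.sub_self, qPoch_zero, mul_one, div_self (qPoch_q_ne n)]

lemma pascal_b (j e : ℕ) :
    (1 - q ^ (j+e+2) * b) * gbinom (j+e+2) (j+1)
      = (1 - q ^ (2*j+e+3) * b) * gbinom (j+e+1) (j+1)
        + q ^ (e+1) * (1 - q ^ (j+1) * b) * gbinom (j+e+1) j := by
  have h1 : j + e + 2 - (j + 1) = e + 1 := by omega
  have h2 : j + e + 1 - (j + 1) = e := by omega
  have h3 : j + e + 1 - j = e + 1 := by omega
  simp only [gbinom, h1, h2, h3]
  rw [show j + e + 2 = (j + e + 1) + 1 from rfl, qPoch_succ q (j+e+1),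
    qPoch_succ q j, qPoch_succ q e]
  have n1 := qPoch_q_ne (j+e+1)
  have n2 := qPoch_q_ne j
  have n3 := qPoch_q_ne e
  have n4 := one_sub_qq_ne j
  have n5 := one_sub_qq_ne e
  have n6 := one_sub_qq_ne (j+e+1)
  have n4' : 1 - q * q ^ j ≠ 0 := by rwa [mul_comm] at n4
  have n5' : 1 - q * q ^ e ≠ 0 := by rwa [mul_comm] at n5
  field_simp
  ring


def A (n k : ℕ) : K :=
  q ^ (k ^ 2) * gbinom (n - 1 - k) k * s ^ k * x ^ (n - 1 - 2 * k) /
    (qPoch (q * b) k * qPoch (q ^ (n - k) * b) k)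

lemma qbFib_eq (n : ℕ) (h : n ≠ 0) :
    qbFib n = ∑ k ∈ range ((n - 1) / 2 + 1), A n k := by
  rw [qbFib, if_neg h]; rfl

lemma A_explicit (n k m d i : ℕ) (h1 : n - 1 - k = m) (h2 : n - 1 - 2*k = d)
    (h3 : n - k = i) :
    A n k = q ^ (k ^ 2) * gbinom m k * s ^ k * x ^ d /
      (qPoch (q * b) k * qPoch (q ^ i * b) k) := by
  unfold A; rw [h1, h2, h3]

lemma A_zero (n : ℕ) : A n 0 = x ^ (n - 1) := by
  simp [A, gbinom_zero, qPoch_zero]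

lemma A_zero_rec (n : ℕ) (h : 2 ≤ n) : A n 0 = x * A (n-1) 0 := by
  rw [A_zero, A_zero, ← pow_succ']
  congr 1
  omega

lemma qPoch_qb_succ (a n : ℕ) : qPoch (q ^ a * b) (n+1)
    = qPoch (q ^ a * b) n * (1 - q ^ (n + a) * b) := by
  rw [qPoch_succ]
  congr 1
  rw [pow_add]
  ring

set_option maxHeartbeats 1000000 in
lemma A_interior (n k : ℕ) (hk : 1 ≤ k) (h : 2*k + 2 ≤ n) :
    A n k = x * A (n-1) k +
      (q ^ (n-2) * s / ((1 - q ^ (n-2) * b) * (1 - q ^ (n-1) * b))) * A (n-2) (k-1) := by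
  obtain ⟨j, rfl⟩ : ∃ j, k = j + 1 := ⟨k - 1, by omega⟩
  obtain ⟨e, rfl⟩ : ∃ e, n = 2*j + e + 4 := ⟨n - (2*j + 4), by omega⟩
  rw [show 2*j + e + 4 - 1 = 2*j + e + 3 from by omega,
      show 2*j + e + 4 - 2 = 2*j + e + 2 from by omega,
      show j + 1 - 1 = j from by omega,
      A_explicit (2*j+e+4) (j+1) (j+e+2) (e+1) (j+e+3) (by omega) (by omega) (by omega),
      A_explicit (2*j+e+3) (j+1) (j+e+1) e (j+e+2) (by omega) (by omega) (by omega),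
      A_explicit (2*j+e+2) j (j+e+1) (e+1) (j+e+2) (by omega) (by omega) (by omega)]
  have hP : gbinom (j+e+2) (j+1)
      = ((1 - q ^ (2*j+e+3) * b) * gbinom (j+e+1) (j+1)
          + q ^ (e+1) * (1 - q ^ (j+1) * b) * gbinom (j+e+1) j)
        / (1 - q ^ (j+e+2) * b) := by
    rw [eq_div_iff (one_sub_qb_ne (j+e+2)), mul_comm, pascal_b]
  rw [hP]
  have r1 : qPoch (q*b) (j+1) = qPoch (q*b) j * (1 - q ^ (j+1) * b) := by
    rw [qPoch_succ]
    congr 1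
    rw [pow_succ]
    ring
  have r2 : qPoch (q ^ (j+e+3) * b) (j+1)
      = qPoch (q ^ (j+e+2) * b) j * (1 - q ^ (2*j+e+2) * b) * (1 - q ^ (2*j+e+3) * b)
        / (1 - q ^ (j+e+2) * b) := by
    rw [eq_div_iff (one_sub_qb_ne (j+e+2))]
    have hs : (1 - q ^ (j+e+2) * b) * qPoch (q ^ (j+e+3) * b) (j+1)
        = qPoch (q ^ (j+e+2) * b) (j+2) := by
      rw [qPoch_shift (q ^ (j+e+2) * b) (j+1)]
      rw [show q * (q ^ (j+e+2) * b) = q ^ (j+e+3) * b from by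
        rw [show j+e+3 = (j+e+2)+1 from rfl, pow_succ]; ring]
    rw [mul_comm (qPoch (q ^ (j+e+3) * b) (j+1)), hs,
        show j+2 = (j+1)+1 from rfl, qPoch_qb_succ, qPoch_qb_succ,
        show j + 1 + (j+e+2) = 2*j+e+3 from by omega,
        show j + (j+e+2) = 2*j+e+2 from by omega]
  have r3 : qPoch (q ^ (j+e+2) * b) (j+1)
      = qPoch (q ^ (j+e+2) * b) j * (1 - q ^ (2*j+e+2) * b) := by
    rw [qPoch_qb_succ, show j + (j+e+2) = 2*j+e+2 from by omega]
  rw [r1, r2, r3]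
  have n1 := qPoch_qb_ne' j
  have n2 := qPoch_qb_ne (j+e+2) j
  have n3 := one_sub_qb_ne (j+1)
  have n4 := one_sub_qb_ne (j+e+2)
  have n5 := one_sub_qb_ne (2*j+e+2)
  have n6 := one_sub_qb_ne (2*j+e+3)
  have n1' : qPoch (b * q) j ≠ 0 := by rwa [mul_comm] at n1
  have n2' : qPoch (b * q ^ (j+e+2)) j ≠ 0 := by rwa [mul_comm] at n2
  have n3' : 1 - b * q ^ (j+1) ≠ 0 := by rwa [mul_comm] at n3
  have n4' : 1 - b * q ^ (j+e+2) ≠ 0 := by rwa [mul_comm] at n4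
  have n5' : 1 - b * q ^ (2*j+e+2) ≠ 0 := by rwa [mul_comm] at n5
  have n6' : 1 - b * q ^ (2*j+e+3) ≠ 0 := by rwa [mul_comm] at n6
  field_simp
  ring

set_option maxHeartbeats 1000000 in
lemma A_boundary (n k : ℕ) (hk : 1 ≤ k) (h : n = 2*k + 1) :
    A n k = (q ^ (n-2) * s / ((1 - q ^ (n-2) * b) * (1 - q ^ (n-1) * b))) * A (n-2) (k-1) := by
  obtain ⟨j, rfl⟩ : ∃ j, k = j + 1 := ⟨k - 1, by omega⟩
  obtain rfl : n = 2*j + 3 := by omega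
  rw [show 2*j + 3 - 1 = 2*j + 2 from by omega,
      show 2*j + 3 - 2 = 2*j + 1 from by omega,
      show j + 1 - 1 = j from by omega,
      A_explicit (2*j+3) (j+1) (j+1) 0 (j+2) (by omega) (by omega) (by omega),
      A_explicit (2*j+1) j j 0 (j+1) (by omega) (by omega) (by omega),
      gbinom_self, gbinom_self]
  have r1 : qPoch (q*b) (j+1) = qPoch (q*b) j * (1 - q ^ (j+1) * b) := by
    rw [qPoch_succ]
    congr 1
    rw [pow_succ]
    ring
  have r2 : qPoch (q ^ (j+2) * b) (j+1)
      = qPoch (q ^ (j+1) * b) j * (1 - q ^ (2*j+1) * b) * (1 - q ^ (2*j+2) * b)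
        / (1 - q ^ (j+1) * b) := by
    rw [eq_div_iff (one_sub_qb_ne (j+1))]
    have hs : (1 - q ^ (j+1) * b) * qPoch (q ^ (j+2) * b) (j+1)
        = qPoch (q ^ (j+1) * b) (j+2) := by
      rw [qPoch_shift (q ^ (j+1) * b) (j+1)]
      rw [show q * (q ^ (j+1) * b) = q ^ (j+2) * b from by
        rw [show j+2 = (j+1)+1 from rfl, pow_succ]; ring]
    rw [mul_comm (qPoch (q ^ (j+2) * b) (j+1)), hs,
        show j+2 = (j+1)+1 from rfl, qPoch_qb_succ, qPoch_qb_succ,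
        show j + 1 + (j+1) = 2*j+2 from by omega,
        show j + (j+1) = 2*j+1 from by omega]
  rw [r1, r2]
  have n1 := qPoch_qb_ne' j
  have n2 := qPoch_qb_ne (j+1) j
  have n3 := one_sub_qb_ne (j+1)
  have n5 := one_sub_qb_ne (2*j+1)
  have n6 := one_sub_qb_ne (2*j+2)
  have n2' : qPoch (b * q ^ (j+1)) j ≠ 0 := by rwa [mul_comm] at n2
  have n3' : 1 - b * q ^ (j+1) ≠ 0 := by rwa [mul_comm] at n3
  have n5' : 1 - b * q ^ (2*j+1) ≠ 0 := by rwa [mul_comm] at n5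
  have n6' : 1 - b * q ^ (2*j+2) ≠ 0 := by rwa [mul_comm] at n6
  field_simp
  ring

lemma qbFib_zero : qbFib 0 = 0 := by rw [qbFib]; simp

lemma main' (M : ℕ) : qbFib (M+2) = x * qbFib (M+1) +
    (q ^ M * s / ((1 - q ^ M * b) * (1 - q ^ (M+1) * b))) * qbFib M := by
  rcases Nat.even_or_odd' M with ⟨t, rfl | rfl⟩
  · rcases t with _ | u
    · -- base case M = 0
      norm_num
      rw [qbFib_zero, qbFib_eq 2 (by norm_num), qbFib_eq 1 (by norm_num)]
      norm_num [Finset.sum_range_one, A_zero]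
    · -- even case: M = 2u+2, n = 2u+4
      rw [show 2*(u+1) = 2*u+2 from by omega]
      rw [show 2*u+2+2 = 2*u+4 from by omega, show 2*u+2+1 = 2*u+3 from by omega]
      rw [qbFib_eq (2*u+4) (by omega), qbFib_eq (2*u+3) (by omega), qbFib_eq (2*u+2) (by omega),
          show (2*u+4-1)/2 + 1 = (u+1)+1 from by omega,
          show (2*u+3-1)/2 + 1 = (u+1)+1 from by omega,
          show (2*u+2-1)/2 + 1 = u+1 from by omega]
      have key : ∀ i ∈ range (u+1), A (2*u+4) (i+1) = x * A (2*u+3) (i+1) +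
          (q ^ (2*u+2) * s / ((1 - q ^ (2*u+2) * b) * (1 - q ^ (2*u+3) * b))) * A (2*u+2) i := by
        intro i hi
        have hi' : i < u+1 := mem_range.mp hi
        have h := A_interior (2*u+4) (i+1) (by omega) (by omega)
        rw [show 2*u+4-1 = 2*u+3 from by omega, show 2*u+4-2 = 2*u+2 from by omega,
            show i+1-1 = i from by omega] at h
        exact h
      have z : A (2*u+4) 0 = x * A (2*u+3) 0 := by
        have h := A_zero_rec (2*u+4) (by omega)
        rw [show 2*u+4-1 = 2*u+3 from by omega] at h
        exact h
      rw [Finset.sum_range_succ' (fun k => A (2*u+4) k) (u+1),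
          Finset.sum_range_succ' (fun k => A (2*u+3) k) (u+1),
          Finset.sum_congr rfl key, z,
          Finset.sum_add_distrib, ← Finset.mul_sum, ← Finset.mul_sum]
      ring
  · -- odd case: n = 2t+3
    rw [show 2*t+1+2 = 2*t+3 from by omega, show 2*t+1+1 = 2*t+2 from by omega]
    rw [qbFib_eq (2*t+3) (by omega), qbFib_eq (2*t+2) (by omega), qbFib_eq (2*t+1) (by omega),
        show (2*t+3-1)/2 + 1 = (t+1)+1 from by omega,
        show (2*t+2-1)/2 + 1 = t+1 from by omega,
        show (2*t+1-1)/2 + 1 = t+1 from by omega]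
    have key : ∀ i ∈ range t, A (2*t+3) (i+1) = x * A (2*t+2) (i+1) +
        (q ^ (2*t+1) * s / ((1 - q ^ (2*t+1) * b) * (1 - q ^ (2*t+2) * b))) * A (2*t+1) i := by
      intro i hi
      have hi' : i < t := mem_range.mp hi
      have h := A_interior (2*t+3) (i+1) (by omega) (by omega)
      rw [show 2*t+3-1 = 2*t+2 from by omega, show 2*t+3-2 = 2*t+1 from by omega,
          show i+1-1 = i from by omega] at h
      exact h
    have bd : A (2*t+3) (t+1) = (q ^ (2*t+1) * s /
        ((1 - q ^ (2*t+1) * b) * (1 - q ^ (2*t+2) * b))) * A (2*t+1) t := by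
      have h := A_boundary (2*t+3) (t+1) (by omega) (by omega)
      rw [show 2*t+3-1 = 2*t+2 from by omega, show 2*t+3-2 = 2*t+1 from by omega,
          show t+1-1 = t from by omega] at h
      exact h
    have z : A (2*t+3) 0 = x * A (2*t+2) 0 := by
      have h := A_zero_rec (2*t+3) (by omega)
      rw [show 2*t+3-1 = 2*t+2 from by omega] at h
      exact h
    rw [Finset.sum_range_succ' (fun k => A (2*t+3) k) (t+1),
        Finset.sum_range_succ (fun i => A (2*t+3) (i+1)) t,
        Finset.sum_range_succ' (fun k => A (2*t+2) k) t,
        Finset.sum_range_succ (fun k => A (2*t+1) k) t,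
        Finset.sum_congr rfl key, bd, z,
        Finset.sum_add_distrib, ← Finset.mul_sum, ← Finset.mul_sum]
    ring

theorem qbFib_recursion (n : ℕ) (hn : 2 ≤ n) :
    qbFib n = x * qbFib (n - 1) +
      (q ^ (n - 2) * s / ((1 - q ^ (n - 2) * b) * (1 - q ^ (n - 1) * b))) * qbFib (n - 2) := by
  obtain ⟨M, rfl⟩ : ∃ M, n = M + 2 := ⟨n - 2, by omega⟩
  rw [show M + 2 - 1 = M + 1 from by omega, show M + 2 - 2 = M from by omega]
  exact main' M

end
end

section
/- The (q,b)-Lucas polynomials L_n(x,b,s,q), defined by L_0 = 1−b, L_1 = x, L_n(x,b,s,q) = x·L_{n-1}(x,qb,qs,q) + (qs/((1-qb)(1-q²b)))·L_{n-2}(x,q²b,q²s,q), also satisfy the fixed-parameter recursion L_n(x,b,s,q) = x·L_{n-1}(x,b,s,q) + (q^{n-1}s/((1-q^{n-2}b)(1-q^{n-1}b)))·L_{n-2}(x,b,s,q) for n ≥ 2. -/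
open Finset

noncomputable section

/-- The (q,b)-Lucas polynomials `L n b s`, defined by `L 0 = 1 - b`, `L 1 = x` and the
parameter-shifting recursion (3.5). -/
def qbLucas : ℕ → K → K → K
  | 0, b, _ => 1 - b
  | 1, _, _ => x
  | (n + 2), b, s =>
      x * qbLucas (n + 1) (q * b) (q * s) +
        (q * s / ((1 - q * b) * (1 - q ^ 2 * b))) * qbLucas n (q ^ 2 * b) (q ^ 2 * s)

/-- `1 - q^k * b ≠ 0` since `q` and `b` are algebraically independent. -/
lemma one_sub_qpow_mul_b_ne_zero (k : ℕ) : (1 : K) - q ^ k * b ≠ 0 := by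
  intro h
  have h1 : q ^ k * b = 1 := by
    have := sub_eq_zero.mp h
    exact this.symm
  have h2 : (algebraMap (MvPolynomial (Fin 4) ℚ) K)
      (MvPolynomial.X 0 ^ k * MvPolynomial.X 1) =
      (algebraMap (MvPolynomial (Fin 4) ℚ) K) 1 := by
    rw [map_mul, map_pow, map_one]
    exact h1
  have h3 : (MvPolynomial.X (R := ℚ) (0 : Fin 4)) ^ k * MvPolynomial.X 1 = 1 :=
    IsFractionRing.injective (MvPolynomial (Fin 4) ℚ) K h2
  have h4 := congrArg (MvPolynomial.eval (fun _ => (0 : ℚ))) h3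
  simp at h4

/-- The numerator polynomials: `qbLucas n` equals `Nqb n` divided by a Pochhammer product. -/
def Nqb : ℕ → K → K → K
  | 0, _, _ => 1
  | 1, _, _ => x
  | (n + 2), b, s =>
      x * (1 - q * b) * Nqb (n + 1) (q * b) (q * s) + q * s * Nqb n (q ^ 2 * b) (q ^ 2 * s)

lemma Nqb_step (n j : ℕ) : Nqb (n + 2) (q ^ j * b) (q ^ j * s) =
    x * (1 - q ^ (j + 1) * b) * Nqb (n + 1) (q ^ (j + 1) * b) (q ^ (j + 1) * s) +
      q ^ (j + 1) * s * Nqb n (q ^ (j + 2) * b) (q ^ (j + 2) * s) := by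
  have e1 : q * (q ^ j * b) = q ^ (j + 1) * b := by ring
  have e2 : q * (q ^ j * s) = q ^ (j + 1) * s := by ring
  have e3 : q ^ 2 * (q ^ j * b) = q ^ (j + 2) * b := by ring
  have e4 : q ^ 2 * (q ^ j * s) = q ^ (j + 2) * s := by ring
  show x * (1 - q * (q ^ j * b)) * Nqb (n + 1) (q * (q ^ j * b)) (q * (q ^ j * s)) +
      q * (q ^ j * s) * Nqb n (q ^ 2 * (q ^ j * b)) (q ^ 2 * (q ^ j * s)) = _
  rw [e1, e2, e3, e4]

lemma qbLucas_step (n j : ℕ) : qbLucas (n + 2) (q ^ j * b) (q ^ j * s) =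
    x * qbLucas (n + 1) (q ^ (j + 1) * b) (q ^ (j + 1) * s) +
      (q ^ (j + 1) * s / ((1 - q ^ (j + 1) * b) * (1 - q ^ (j + 2) * b))) *
        qbLucas n (q ^ (j + 2) * b) (q ^ (j + 2) * s) := by
  have e1 : q * (q ^ j * b) = q ^ (j + 1) * b := by ring
  have e2 : q * (q ^ j * s) = q ^ (j + 1) * s := by ring
  have e3 : q ^ 2 * (q ^ j * b) = q ^ (j + 2) * b := by ring
  have e4 : q ^ 2 * (q ^ j * s) = q ^ (j + 2) * s := by ring
  show x * qbLucas (n + 1) (q * (q ^ j * b)) (q * (q ^ j * s)) +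
      (q * (q ^ j * s) / ((1 - q * (q ^ j * b)) * (1 - q ^ 2 * (q ^ j * b)))) *
        qbLucas n (q ^ 2 * (q ^ j * b)) (q ^ 2 * (q ^ j * s)) = _
  rw [e1, e2, e3, e4]

/-- The fixed-parameter recursion on the numerator polynomials. -/
lemma Nqb_fixed (n : ℕ) : ∀ j : ℕ, Nqb (n + 2) (q ^ j * b) (q ^ j * s) =
    x * (1 - q ^ (n + j + 1) * b) * Nqb (n + 1) (q ^ j * b) (q ^ j * s) +
      q ^ (n + j + 1) * s * Nqb n (q ^ j * b) (q ^ j * s) := by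
  induction n using Nat.twoStepInduction with
  | zero =>
    intro j
    rw [Nqb_step]
    show x * (1 - q ^ (j + 1) * b) * x + q ^ (j + 1) * s * 1 =
      x * (1 - q ^ (0 + j + 1) * b) * x + q ^ (0 + j + 1) * s * 1
    ring_nf
  | one =>
    intro j
    have d1 := Nqb_step 1 j
    have d2 := Nqb_step 0 (j + 1)
    have d3 := Nqb_step 0 j
    rw [d1, d2, d3]
    simp only [Nqb]
    ring
  | more m ih1 ih2 =>
    intro j
    have d0 := Nqb_step (m + 2) j
    have d1 := Nqb_step (m + 1) j
    have d2 := Nqb_step m j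
    have h1 := ih2 (j + 1)
    have h2 := ih1 (j + 2)
    have e1 : m + 1 + (j + 1) + 1 = m + 2 + j + 1 := by omega
    have e2 : m + (j + 2) + 1 = m + 2 + j + 1 := by omega
    rw [e1] at h1
    rw [e2] at h2
    rw [d0, h1, h2, d1, d2]
    ring

/-- `qbLucas (n+1)` times the Pochhammer product equals `Nqb (n+1)`. -/
lemma qbLucas_mul_poch (n : ℕ) : ∀ j : ℕ,
    qbLucas (n + 1) (q ^ j * b) (q ^ j * s) * ∏ i ∈ range n, (1 - q ^ (i + j + 1) * b) =
      Nqb (n + 1) (q ^ j * b) (q ^ j * s) := by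
  induction n using Nat.twoStepInduction with
  | zero =>
    intro j
    simp [qbLucas, Nqb]
  | one =>
    intro j
    rw [qbLucas_step, Nqb_step]
    have hb1 := one_sub_qpow_mul_b_ne_zero (j + 1)
    have hb2 := one_sub_qpow_mul_b_ne_zero (j + 2)
    show (x * x + q ^ (j + 1) * s / ((1 - q ^ (j + 1) * b) * (1 - q ^ (j + 2) * b)) *
        (1 - q ^ (j + 2) * b)) * ∏ i ∈ range 1, (1 - q ^ (i + j + 1) * b) =
      x * (1 - q ^ (j + 1) * b) * x + q ^ (j + 1) * s * 1
    rw [prod_range_one]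
    have hb2' : (1:K) - b * q ^ (j + 2) ≠ 0 := by rw [mul_comm]; exact hb2
    field_simp
    ring
  | more m ih1 ih2 =>
    intro j
    have hb1 := one_sub_qpow_mul_b_ne_zero (j + 1)
    have hb2 := one_sub_qpow_mul_b_ne_zero (j + 2)
    have h1 := ih2 (j + 1)
    have h2 := ih1 (j + 2)
    have p1 : ∏ i ∈ range (m + 2), (1 - q ^ (i + j + 1) * b) =
        (1 - q ^ (j + 1) * b) * ∏ i ∈ range (m + 1), (1 - q ^ (i + (j + 1) + 1) * b) := by
      rw [prod_range_succ', mul_comm]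
      congr 1
      · norm_num
      · exact prod_congr rfl fun i _ => by
          rw [show i + 1 + j + 1 = i + (j + 1) + 1 from by omega]
    have p2 : ∏ i ∈ range (m + 1), (1 - q ^ (i + (j + 1) + 1) * b) =
        (1 - q ^ (j + 2) * b) * ∏ i ∈ range m, (1 - q ^ (i + (j + 2) + 1) * b) := by
      rw [prod_range_succ', mul_comm]
      congr 1
      · norm_num
      · exact prod_congr rfl fun i _ => by
          rw [show i + 1 + (j + 1) + 1 = i + (j + 2) + 1 from by omega]
    rw [qbLucas_step, Nqb_step, ← h1, ← h2, p1, p2]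
    have hb2' : (1:K) - b * q ^ (j + 2) ≠ 0 := by rw [mul_comm]; exact hb2
    field_simp

lemma qbLucas_mul_poch0 (n : ℕ) :
    qbLucas (n + 1) b s * ∏ i ∈ range n, (1 - q ^ (i + 1) * b) = Nqb (n + 1) b s := by
  have h := qbLucas_mul_poch n 0
  simpa using h

lemma Nqb_fixed0 (n : ℕ) : Nqb (n + 2) b s =
    x * (1 - q ^ (n + 1) * b) * Nqb (n + 1) b s + q ^ (n + 1) * s * Nqb n b s := by
  have h := Nqb_fixed n 0
  simpa using h

lemma poch_ne_zero (n : ℕ) : (∏ i ∈ range n, (1 - q ^ (i + 1) * b)) ≠ 0 := by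
  apply prod_ne_zero_iff.mpr
  intro i _
  exact one_sub_qpow_mul_b_ne_zero (i + 1)

/-- The (q,b)-Lucas polynomials also satisfy the fixed-parameter recursion (3.8). -/
theorem qbLucas_fixed_recursion (n : ℕ) (hn : 2 ≤ n) :
    qbLucas n b s = x * qbLucas (n - 1) b s +
      (q ^ (n - 1) * s / ((1 - q ^ (n - 2) * b) * (1 - q ^ (n - 1) * b))) *
        qbLucas (n - 2) b s := by
  obtain ⟨m, rfl⟩ : ∃ m, n = m + 2 := ⟨n - 2, by omega⟩
  simp only [show m + 2 - 1 = m + 1 from rfl, show m + 2 - 2 = m from rfl]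
  cases m with
  | zero =>
    have hb0 : (1 : K) - b ≠ 0 := by simpa using one_sub_qpow_mul_b_ne_zero 0
    have hb1 : (1 : K) - q * b ≠ 0 := by simpa using one_sub_qpow_mul_b_ne_zero 1
    have hb2 := one_sub_qpow_mul_b_ne_zero 2
    show x * qbLucas 1 (q * b) (q * s) +
        (q * s / ((1 - q * b) * (1 - q ^ 2 * b))) * qbLucas 0 (q ^ 2 * b) (q ^ 2 * s) = _
    show x * x + (q * s / ((1 - q * b) * (1 - q ^ 2 * b))) * (1 - q ^ 2 * b) =
      x * x + (q ^ 1 * s / ((1 - q ^ 0 * b) * (1 - q ^ 1 * b))) * (1 - b)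
    rw [pow_zero, pow_one]
    field_simp
  | succ k =>
    have hb1 := one_sub_qpow_mul_b_ne_zero (k + 1)
    have hb2 := one_sub_qpow_mul_b_ne_zero (k + 2)
    have hP := poch_ne_zero k
    have hs3 := qbLucas_mul_poch0 (k + 2)
    have hs2 := qbLucas_mul_poch0 (k + 1)
    have hs1 := qbLucas_mul_poch0 k
    have hN := Nqb_fixed0 (k + 1)
    have hp2 : ∏ i ∈ range (k + 2), (1 - q ^ (i + 1) * b) =
        (∏ i ∈ range (k + 1), (1 - q ^ (i + 1) * b)) * (1 - q ^ (k + 2) * b) := by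
      rw [prod_range_succ]
    have hp1 : ∏ i ∈ range (k + 1), (1 - q ^ (i + 1) * b) =
        (∏ i ∈ range k, (1 - q ^ (i + 1) * b)) * (1 - q ^ (k + 1) * b) := by
      rw [prod_range_succ]
    rw [hp2, hp1] at hs3
    rw [hp1] at hs2
    have L3 : qbLucas (k + 3) b s = Nqb (k + 3) b s /
        ((∏ i ∈ range k, (1 - q ^ (i + 1) * b)) * (1 - q ^ (k + 1) * b) * (1 - q ^ (k + 2) * b)) := by
      rw [eq_div_iff (by exact mul_ne_zero (mul_ne_zero hP hb1) hb2)]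
      exact hs3
    have L2 : qbLucas (k + 2) b s = Nqb (k + 2) b s /
        ((∏ i ∈ range k, (1 - q ^ (i + 1) * b)) * (1 - q ^ (k + 1) * b)) := by
      rw [eq_div_iff (mul_ne_zero hP hb1)]
      exact hs2
    have L1 : qbLucas (k + 1) b s = Nqb (k + 1) b s /
        (∏ i ∈ range k, (1 - q ^ (i + 1) * b)) := by
      rw [eq_div_iff hP]
      exact hs1
    rw [show k + 1 + 2 = k + 3 from rfl] at *
    rw [L3, L2, L1, hN]
    field_simp

end
end
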